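/- Let L ⊆ Σ* be a regular language. Then L has finite variation if and only if its syntactic monoid M(L) is R-trivial. -/

import Mathlib

open Matrix

/-- Two words are Nerode-equivalent w.r.t. `L` (they reach the same state of the
minimal automaton of `L`) if they have the same residuals:
`∀ z, u z ∈ L ↔ u' z ∈ L`. -/
def NerodeEquiv {σ : Type} (L : Set (List σ)) (u u' : List σ) : Prop :=
  ∀ z : List σ, u ++ z ∈ L ↔ u' ++ z ∈ L

/-- The variation `var_L(w)` of a word `w = w₁⋯w_n`: the number of indices
`0 ≤ k < n` such that the prefixes `w₁⋯w_k` and `w₁⋯w_{k+1}` are not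
Nerode-equivalent. -/
noncomputable def variation {σ : Type} (L : Set (List σ)) (w : List σ) : ℕ :=
  Nat.card {k : ℕ // k < w.length ∧ ¬ NerodeEquiv L (w.take k) (w.take (k + 1))}

/-- A language has finite variation if `sup_{w} var_L(w) < ∞`. -/
def FiniteVariation {σ : Type} (L : Set (List σ)) : Prop :=
  ∃ B : ℕ, ∀ w : List σ, variation L w ≤ B
/-- The syntactic congruence of a language `L` on the free monoid:
`x ∼_L y` iff for all contexts `a, b`, `a x b ∈ L ↔ a y b ∈ L`. -/
def synCon {σ : Type} (L : Set (FreeMonoid σ)) : Con (FreeMonoid σ) where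
  r x y := ∀ a b : FreeMonoid σ, a * x * b ∈ L ↔ a * y * b ∈ L
  iseqv :=
    ⟨fun _ _ _ => Iff.rfl, fun h a b => (h a b).symm, fun h₁ h₂ a b => (h₁ a b).trans (h₂ a b)⟩
  mul' := by
    intro w x y z hw hy a b
    have h1 : a * (w * y) * b ∈ L ↔ a * (x * y) * b ∈ L := by
      have := hw a (y * b); simpa [mul_assoc] using this
    have h2 : a * (x * y) * b ∈ L ↔ a * (x * z) * b ∈ L := by
      have := hy (a * x) b; simpa [mul_assoc] using this
    exact h1.trans h2

/-- The syntactic monoid `M(L) = Σ*/∼_L` of a language `L`. -/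
def SynMonoid {σ : Type} (L : Set (FreeMonoid σ)) : Type := (synCon L).Quotient

noncomputable instance {σ : Type} (L : Set (FreeMonoid σ)) : Monoid (SynMonoid L) :=
  inferInstanceAs (Monoid (synCon L).Quotient)

noncomputable instance {σ : Type} (L : Set (List σ)) : Monoid (SynMonoid (σ := σ) L) :=
  inferInstanceAs (Monoid (synCon (σ := σ) L).Quotient)

/-- A monoid is `J`-trivial if `M a M = M b M` implies `a = b`. -/
def IsJTrivial (M : Type*) [Monoid M] : Prop :=
  ∀ a b : M,
    (Set.range fun p : M × M => p.1 * a * p.2) = (Set.range fun p : M × M => p.1 * b * p.2) →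
      a = b

/-- A monoid is `R`-trivial if `a M = b M` implies `a = b`. -/
def IsRTrivial (M : Type*) [Monoid M] : Prop :=
  ∀ a b : M, (Set.range fun x => a * x) = (Set.range fun x => b * x) → a = b

/-- A monoid is a block-group if every `R`-class and every `L`-class contains at most
one idempotent. -/
def IsBlockGroup (M : Type*) [Monoid M] : Prop :=
  ∀ e f : M, IsIdempotentElem e → IsIdempotentElem f →
    (((Set.range fun x => e * x) = Set.range fun x => f * x) ∨
      ((Set.range fun x => x * e) = Set.range fun x => x * f)) → e = f

section Aux
variable {σ : Type} (L : Set (List σ))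

def mkS (L : Set (List σ)) (w : List σ) : SynMonoid (σ := σ) L :=
  (synCon (σ := σ) L).mk' (FreeMonoid.ofList w)

lemma mkS_mul (u v : List σ) : mkS L (u ++ v) = mkS L u * mkS L v := rfl

lemma mkS_eq_iff {u v : List σ} : mkS L u = mkS L v ↔ synCon (σ := σ) L u v := Con.eq _

lemma synCon_iff (u v : List σ) :
    synCon (σ := σ) L u v ↔ ∀ p q : List σ, p ++ u ++ q ∈ L ↔ p ++ v ++ q ∈ L := Iff.rfl

lemma mkS_surjective : Function.Surjective (mkS L) := fun c => Quotient.exists_rep c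

lemma synCon_nerode {u v : List σ} (h : synCon (σ := σ) L u v) : NerodeEquiv L u v :=
  fun z => ((synCon_iff L u v).mp h) [] z

lemma nerode_refl (u : List σ) : NerodeEquiv L u u := fun _ => Iff.rfl

lemma nerode_trans {u v w : List σ} (h1 : NerodeEquiv L u v) (h2 : NerodeEquiv L v w) :
    NerodeEquiv L u w := fun z => (h1 z).trans (h2 z)

lemma nerode_chain (w : List σ) :
    ∀ j i, i ≤ j → (∀ k, i ≤ k → k < j → NerodeEquiv L (w.take k) (w.take (k + 1))) →
      NerodeEquiv L (w.take i) (w.take j) := by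
  intro j
  induction j with
  | zero => intro i hi _; obtain rfl := Nat.le_zero.mp hi; exact nerode_refl L _
  | succ j ih =>
    intro i hi h
    rcases Nat.eq_or_lt_of_le hi with rfl | hlt
    · exact nerode_refl L _
    · have hij : i ≤ j := Nat.lt_succ_iff.mp hlt
      exact nerode_trans L (ih i hij (fun k hk1 hk2 => h k hk1 (Nat.lt_succ_of_lt hk2)))
        (h j hij (Nat.lt_succ_self j))

lemma exists_bad_step (w : List σ) (i j : ℕ) (hij : i ≤ j)
    (h : ¬ NerodeEquiv L (w.take i) (w.take j)) :
    ∃ k, i ≤ k ∧ k < j ∧ ¬ NerodeEquiv L (w.take k) (w.take (k + 1)) := by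
  by_contra hc
  push_neg at hc
  exact h (nerode_chain L w j i hij (fun k hk1 hk2 => hc k hk1 hk2))

end Aux
section Dir1
variable {σ : Type} (L : Set (List σ))

lemma rTrivial_to_FV (hfin : Finite (SynMonoid (σ := σ) L))
    (hR : IsRTrivial (SynMonoid (σ := σ) L)) : FiniteVariation L := by
  haveI := hfin
  refine ⟨Nat.card (Set (SynMonoid (σ := σ) L)), fun w => ?_⟩
  -- the right-ideal map
  set R : ℕ → Set (SynMonoid (σ := σ) L) :=
    fun k => Set.range (fun x => mkS L (w.take k) * x) with hRdef
  have hmono : ∀ m m', m ≤ m' → R m' ⊆ R m := by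
    intro m m' hmm
    have htake : w.take m' = w.take m ++ (w.drop m).take (m' - m) := by
      rw [← List.take_add, Nat.add_sub_cancel' hmm]
    rintro c ⟨x, rfl⟩
    exact ⟨mkS L ((w.drop m).take (m' - m)) * x, by
      simp only [hRdef, htake, mkS_mul, mul_assoc]⟩
  have key : ∀ k k' : {k : ℕ // k < w.length ∧ ¬ NerodeEquiv L (w.take k) (w.take (k + 1))},
      k.1 < k'.1 → R k.1 ≠ R k'.1 := by
    intro k k' hlt heq
    have h1 : R k.1 = R (k.1 + 1) := by
      refine le_antisymm ?_ (hmono _ _ (Nat.le_succ _))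
      calc R k.1 = R k'.1 := heq
        _ ⊆ R (k.1 + 1) := hmono _ _ hlt
    have h2 : mkS L (w.take k.1) = mkS L (w.take (k.1 + 1)) := hR _ _ h1
    exact k.2.2 (synCon_nerode L ((mkS_eq_iff L).mp h2))
  have hinj : Function.Injective
      (fun k : {k : ℕ // k < w.length ∧ ¬ NerodeEquiv L (w.take k) (w.take (k + 1))} => R k.1) := by
    intro k k' h
    rcases lt_trichotomy k.1 k'.1 with h1 | h1 | h1
    · exact absurd h (key k k' h1)
    · exact Subtype.ext h1
    · exact absurd h.symm (key k' k h1)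
  simpa [variation] using Nat.card_le_card_of_injective _ hinj

end Dir1
section Fin
variable {σ : Type} (L : Set (List σ))

lemma synMonoid_finite {Q : Type} [Fintype Q] (M : DFA σ Q)
    (hM : ∀ w, w ∈ M.accepts ↔ w ∈ L) : Finite (SynMonoid (σ := σ) L) := by
  classical
  set φ : List σ → Q → Q := fun w q => M.evalFrom q w with hφ
  have hkey : ∀ u v : List σ, φ u = φ v → synCon (σ := σ) L u v := by
    intro u v h
    rw [synCon_iff]
    intro p q
    have hmem : ∀ w : List σ, w ∈ L ↔ M.evalFrom M.start w ∈ M.accept := by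
      intro w; exact (hM w).symm.trans (DFA.mem_accepts M)
    have heval : ∀ x : List σ, φ x = φ x := fun _ => rfl
    have e1 : M.evalFrom M.start (p ++ u ++ q) = M.evalFrom (φ u (M.evalFrom M.start p)) q := by
      rw [DFA.evalFrom_of_append, DFA.evalFrom_of_append]
    have e2 : M.evalFrom M.start (p ++ v ++ q) = M.evalFrom (φ v (M.evalFrom M.start p)) q := by
      rw [DFA.evalFrom_of_append, DFA.evalFrom_of_append]
    rw [hmem, hmem, e1, e2, h]
  set F : (Q → Q) → SynMonoid (σ := σ) L := fun f =>
    if h : ∃ w : List σ, φ w = f then mkS L h.choose else mkS L [] with hF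
  have hsurj : Function.Surjective F := by
    intro c
    obtain ⟨w, rfl⟩ := mkS_surjective L c
    refine ⟨φ w, ?_⟩
    have hex : ∃ w' : List σ, φ w' = φ w := ⟨w, rfl⟩
    simp only [hF, dif_pos hex]
    exact (mkS_eq_iff L).mpr (hkey _ _ hex.choose_spec)
  exact Finite.of_surjective F hsurj

end Fin
section Dir2
variable {σ : Type} (L : Set (List σ))

lemma not_rTrivial_to_not_FV (h : ¬ IsRTrivial (SynMonoid (σ := σ) L)) :
    ¬ FiniteVariation L := by
  simp only [IsRTrivial, not_forall] at h
  obtain ⟨a, b, hr, hab⟩ := h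
  obtain ⟨x, rfl⟩ := mkS_surjective L a
  obtain ⟨y, rfl⟩ := mkS_surjective L b
  obtain ⟨mt, hmt⟩ : ∃ m, mkS L x * m = mkS L y := by
    have : mkS L y ∈ Set.range (fun z => mkS L x * z) := by
      rw [hr]; exact ⟨1, mul_one _⟩
    exact this
  obtain ⟨t, rfl⟩ := mkS_surjective L mt
  obtain ⟨ms, hms⟩ : ∃ m, mkS L y * m = mkS L x := by
    have : mkS L x ∈ Set.range (fun z => mkS L y * z) := by
      rw [← hr]; exact ⟨1, mul_one _⟩
    exact this
  obtain ⟨s, rfl⟩ := mkS_surjective L ms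
  have hnc : ¬ synCon (σ := σ) L x y := fun hc => hab ((mkS_eq_iff L).mpr hc)
  rw [synCon_iff] at hnc
  obtain ⟨p, hp⟩ := not_forall.mp hnc
  obtain ⟨q, hpq⟩ := not_forall.mp hp
  -- the word family
  set P : ℕ → List σ := fun i => Nat.rec (p ++ x) (fun _ ih => ih ++ (t ++ s)) i with hPdef
  have hPs : ∀ i, P (i + 1) = P i ++ (t ++ s) := fun _ => rfl
  have hclass : ∀ i, mkS L (P i) = mkS L p * mkS L x := by
    intro i
    induction i with
    | zero => exact mkS_mul L p x
    | succ i ih =>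
      rw [hPs, mkS_mul, mkS_mul, ih, mul_assoc, ← mul_assoc (mkS L x), hmt, hms]
  have hclasst : ∀ i, mkS L (P i ++ t) = mkS L p * mkS L y := by
    intro i
    rw [mkS_mul, hclass, mul_assoc, hmt]
  have hbad : ∀ i, ¬ NerodeEquiv L (P i) (P i ++ t) := by
    intro i hN
    have c1 : P i ++ q ∈ L ↔ (p ++ x) ++ q ∈ L := by
      have hc := (mkS_eq_iff L).mp ((hclass i).trans (mkS_mul L p x).symm)
      exact (synCon_iff L _ _).mp hc [] q
    have c2 : (P i ++ t) ++ q ∈ L ↔ (p ++ y) ++ q ∈ L := by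
      have hc := (mkS_eq_iff L).mp ((hclasst i).trans (mkS_mul L p y).symm)
      exact (synCon_iff L _ _).mp hc [] q
    exact hpq ((c1.symm.trans (hN q)).trans c2)
  -- lengths
  set ℓ : ℕ → ℕ := fun i => (P i).length with hℓdef
  have hℓs : ∀ i, ℓ (i + 1) = ℓ i + (t.length + s.length) := by
    intro i; simp [hℓdef, hPs, List.length_append]
  have hℓmono : Monotone ℓ := monotone_nat_of_le_succ (fun i => by rw [hℓs]; omega)
  have hpre : ∀ i j, i ≤ j → P i <+: P j := by
    intro i j hij
    induction j, hij using Nat.le_induction with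
    | base => exact List.prefix_rfl
    | succ j hij ih => exact ih.trans ⟨t ++ s, (hPs j).symm⟩
  have hpret : ∀ i j, i < j → P i ++ t <+: P j := by
    intro i j hij
    refine List.IsPrefix.trans ⟨s, ?_⟩ (hpre (i + 1) j hij)
    rw [hPs]; simp [List.append_assoc]
  -- conclusion
  rintro ⟨B, hB⟩
  set n := B + 1 with hn
  set w := P n with hw
  have hbadtake : ∀ i, i < n → ∃ k, (ℓ i ≤ k ∧ k < ℓ i + t.length) ∧
      k < w.length ∧ ¬ NerodeEquiv L (w.take k) (w.take (k + 1)) := by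
    intro i hin
    have htk1 : w.take (ℓ i) = P i := ((List.prefix_iff_eq_take.mp (hpre i n hin.le))).symm
    have htk2 : w.take (ℓ i + t.length) = P i ++ t := by
      have := (List.prefix_iff_eq_take.mp (hpret i n hin)).symm
      rwa [List.length_append] at this
    have hbt : ¬ NerodeEquiv L (w.take (ℓ i)) (w.take (ℓ i + t.length)) := by
      rw [htk1, htk2]; exact hbad i
    obtain ⟨k, hk1, hk2, hk3⟩ := exists_bad_step L w (ℓ i) (ℓ i + t.length) (by omega) hbt
    refine ⟨k, ⟨hk1, hk2⟩, ?_, hk3⟩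
    have h1 : ℓ i + t.length ≤ ℓ (i + 1) := by rw [hℓs]; omega
    have h2 : ℓ (i + 1) ≤ ℓ n := hℓmono hin
    have : w.length = ℓ n := rfl
    omega
  choose f hf1 hf3 hf4 using fun (i : Fin n) => hbadtake i.1 i.2
  set S := {k : ℕ // k < w.length ∧ ¬ NerodeEquiv L (w.take k) (w.take (k + 1))} with hS
  have hfmono : ∀ i j : Fin n, i < j → f i < f j := by
    intro i j hij
    have h1 : f i < ℓ i.1 + t.length := (hf1 i).2
    have h2 : ℓ i.1 + t.length ≤ ℓ (i.1 + 1) := by rw [hℓs]; omega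
    have h3 : ℓ (i.1 + 1) ≤ ℓ j.1 := hℓmono hij
    have h4 : ℓ j.1 ≤ f j := (hf1 j).1
    omega
  have hginj : Function.Injective (fun i : Fin n => (⟨f i, hf3 i, hf4 i⟩ : S)) := by
    intro i j hij
    have : f i = f j := congrArg Subtype.val hij
    rcases lt_trichotomy i j with h1 | h1 | h1
    · exact absurd this (Nat.ne_of_lt (hfmono i j h1))
    · exact h1
    · exact absurd this.symm (Nat.ne_of_lt (hfmono j i h1))
  haveI : Finite S := by
    apply Finite.of_injective (fun k : S => (⟨k.1, k.2.1⟩ : Fin w.length))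
    intro u v huv
    exact Subtype.ext (by simpa using congrArg Fin.val huv)
  have hcard : n ≤ Nat.card S := by
    simpa using Nat.card_le_card_of_injective _ hginj
  have hvar : variation L w = Nat.card S := rfl
  have := hB w
  rw [hvar] at this
  omega

end Dir2

/-- A regular language `L ⊆ Σ*` has finite variation if and only if
its syntactic monoid `M(L)` is `R`-trivial. -/
theorem finiteVariation_iff_rTrivial
    (σ : Type) [Fintype σ] [Nonempty σ] (L : Set (List σ))
    (hreg : ∃ (Q : Type) (_ : Fintype Q) (M : DFA σ Q), ∀ w, w ∈ M.accepts ↔ w ∈ L) :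
    FiniteVariation L ↔ IsRTrivial (SynMonoid (σ := σ) L) := by
  constructor
  · intro hFV
    by_contra hR
    exact not_rTrivial_to_not_FV L hR hFV
  · intro hR
    obtain ⟨Q, hQ, M, hM⟩ := hreg
    haveI := hQ
    exact rTrivial_to_FV L (synMonoid_finite L M hM) hR
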